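/- Let k ≥ 1 and ε ∈ {1,−1}. Let F ∈ ℝ^{(2k+1)×(2k+1)} be the matrix with F_{i,2k+2−i} = (−1)^{i+1}ε and all other entries 0, let p ∈ ℝ^{(2k+1)×(2k+1)} be the shift matrix (p_{i,i+1} = 1, all other entries 0) and P ∈ ℝ^{(2k+2)×(2k+2)} the shift matrix (P_{i,i+1} = 1). Let A = span_ℝ{p^{2j−1} : j = 1,…,k}, let S = {E(Σ_{j=1}^{k} a_j p^{2j−1}, α e_1) : a_1,…,a_k, α ∈ ℝ} ⊆ e(F) and M* = span_ℝ{P^{2j−1} : j = 1,…,k+1} ⊆ ℝ^{(2k+2)×(2k+2)}. Then M* ⊆ e(F), M* is a maximal abelian subalgebra of e(F), and every maximal abelian subalgebra M of e(F) satisfying {X : E(X,ξ) ∈ M for some ξ} = A and M ∩ T(2k+1) = ℝ·E(0,e_1) is conjugate, under conjugation by an element of the group E(F)-grp, either to S or to M*. -/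

import Mathlib

open Matrix

/-- `o(K)`: real matrices `X` with `XK + KXᵀ = 0`. -/
def oK {n : ℕ} (K : Matrix (Fin n) (Fin n) ℝ) : Set (Matrix (Fin n) (Fin n) ℝ) :=
  {X | X * K + K * Xᵀ = 0}

/-- The `(n+1) × (n+1)` matrix `E(X, a)` with block form `[[X, a], [0, 0]]`. -/
def Emat {n : ℕ} (X : Matrix (Fin n) (Fin n) ℝ) (a : Fin n → ℝ) :
    Matrix (Fin (n + 1)) (Fin (n + 1)) ℝ :=
  Matrix.of fun i j =>
    if hi : i.val < n then
      if hj : j.val < n then X ⟨i.val, hi⟩ ⟨j.val, hj⟩ else a ⟨i.val, hi⟩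
    else 0

/-- The Lie algebra `e(K)`, as a set of `(n+1) × (n+1)` matrices. -/
def eK {n : ℕ} (K : Matrix (Fin n) (Fin n) ℝ) :
    Set (Matrix (Fin (n + 1)) (Fin (n + 1)) ℝ) :=
  {m | ∃ X ∈ oK K, ∃ a : Fin n → ℝ, m = Emat X a}

/-- `M` is a maximal abelian subalgebra of the matrix Lie algebra (set) `L`:
it is a linear subspace contained in `L`, its elements pairwise commute, and
every element of `L` commuting with all of `M` belongs to `M`. -/
def IsMASA {κ : Type*} [Fintype κ] (L M : Set (Matrix κ κ ℝ)) : Prop :=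
  M ⊆ L ∧
  (∀ X ∈ M, ∀ Y ∈ M, X * Y = Y * X) ∧
  (0 : Matrix κ κ ℝ) ∈ M ∧
  (∀ X ∈ M, ∀ Y ∈ M, X + Y ∈ M) ∧
  (∀ (c : ℝ), ∀ X ∈ M, c • X ∈ M) ∧
  (∀ Y ∈ L, (∀ X ∈ M, Y * X = X * Y) → Y ∈ M)

/-- The group element of `E(K)` with block form `[[G, a], [0, 1]]`. -/
def Ggrp {n : ℕ} (G : Matrix (Fin n) (Fin n) ℝ) (a : Fin n → ℝ) :
    Matrix (Fin (n + 1)) (Fin (n + 1)) ℝ :=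
  Matrix.of fun i j =>
    if hi : i.val < n then
      if hj : j.val < n then G ⟨i.val, hi⟩ ⟨j.val, hj⟩ else a ⟨i.val, hi⟩
    else
      if j.val < n then 0 else 1

/-- `M` is conjugate to `S` by an element `[[G, a], [0, 1]]` of the group `E(K)`. -/
def ConjTo {n : ℕ} (K : Matrix (Fin n) (Fin n) ℝ)
    (M S : Set (Matrix (Fin (n + 1)) (Fin (n + 1)) ℝ)) : Prop :=
  ∃ (G : Matrix (Fin n) (Fin n) ℝ) (a : Fin n → ℝ),
    G * K * Gᵀ = K ∧
    M = (fun m => Ggrp G a * m * (Ggrp G a)⁻¹) '' S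

/-- The antidiagonal metric `F` with `F_{i,2k+2-i} = (-1)^{i+1} ε` (1-indexed). -/
def Fmat (k : ℕ) (ε : ℝ) : Matrix (Fin (2 * k + 1)) (Fin (2 * k + 1)) ℝ :=
  Matrix.of fun i j => if i.val + j.val = 2 * k then (-1) ^ i.val * ε else 0

/-- The nilpotent shift matrix `p`, `p_{i,i+1} = 1`. -/
def shiftMat (n : ℕ) : Matrix (Fin n) (Fin n) ℝ :=
  Matrix.of fun i j => if j.val = i.val + 1 then 1 else 0

/-- The first standard basis vector `e₁`. -/
def e1 (n : ℕ) : Fin n → ℝ := fun i => if i.val = 0 then 1 else 0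

/-- `A = span{p^{2j-1} : j = 1, …, k}`. -/
def Aset (k : ℕ) : Set (Matrix (Fin (2 * k + 1)) (Fin (2 * k + 1)) ℝ) :=
  {X | ∃ c : Fin k → ℝ, X = ∑ j : Fin k, c j • shiftMat (2 * k + 1) ^ (2 * j.val + 1)}

/-- The splitting MASA `S = {E(Σ aⱼ p^{2j-1}, α e₁)}`. -/
def Sset (k : ℕ) : Set (Matrix (Fin (2 * k + 1 + 1)) (Fin (2 * k + 1 + 1)) ℝ) :=
  {m | ∃ (c : Fin k → ℝ) (α : ℝ),
    m = Emat (∑ j : Fin k, c j • shiftMat (2 * k + 1) ^ (2 * j.val + 1))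
      (α • e1 (2 * k + 1))}

/-- The nonsplitting MASA `M* = span{P^{2j-1} : j = 1, …, k+1}`. -/
def Mstar (k : ℕ) : Set (Matrix (Fin (2 * k + 1 + 1)) (Fin (2 * k + 1 + 1)) ℝ) :=
  {m | ∃ c : Fin (k + 1) → ℝ,
    m = ∑ j : Fin (k + 1), c j • shiftMat (2 * k + 1 + 1) ^ (2 * j.val + 1)}


variable {n : ℕ}

lemma Emat_apply (X : Matrix (Fin n) (Fin n) ℝ) (a : Fin n → ℝ) (i j : Fin (n+1)) :
    Emat X a i j = if hi : i.val < n then (if hj : j.val < n then X ⟨i,hi⟩ ⟨j,hj⟩ else a ⟨i,hi⟩) else 0 := rfl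

lemma Ggrp_apply (G : Matrix (Fin n) (Fin n) ℝ) (a : Fin n → ℝ) (i j : Fin (n+1)) :
    Ggrp G a i j = if hi : i.val < n then (if hj : j.val < n then G ⟨i,hi⟩ ⟨j,hj⟩ else a ⟨i,hi⟩)
      else (if j.val < n then 0 else 1) := rfl

lemma Emat_mul_Emat (X Y : Matrix (Fin n) (Fin n) ℝ) (a b : Fin n → ℝ) :
    Emat X a * Emat Y b = Emat (X * Y) (X *ᵥ b) := by
  ext i j
  rw [mul_apply, Fin.sum_univ_castSucc]
  induction i using Fin.lastCases with
  | last => simp [Emat_apply]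
  | cast i =>
    induction j using Fin.lastCases with
    | last => simp [Emat_apply, mulVec, dotProduct]
    | cast j => simp [Emat_apply, mul_apply]

lemma Ggrp_mul_Emat (G : Matrix (Fin n) (Fin n) ℝ) (a : Fin n → ℝ)
    (X : Matrix (Fin n) (Fin n) ℝ) (ξ : Fin n → ℝ) :
    Ggrp G a * Emat X ξ = Emat (G * X) (G *ᵥ ξ) := by
  ext i j
  rw [mul_apply, Fin.sum_univ_castSucc]
  induction i using Fin.lastCases with
  | last => simp [Emat_apply, Ggrp_apply]
  | cast i =>
    induction j using Fin.lastCases with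
    | last => simp [Emat_apply, Ggrp_apply, mulVec, dotProduct]
    | cast j => simp [Emat_apply, Ggrp_apply, mul_apply]

lemma Emat_mul_Ggrp (X : Matrix (Fin n) (Fin n) ℝ) (ξ : Fin n → ℝ)
    (G : Matrix (Fin n) (Fin n) ℝ) (a : Fin n → ℝ) :
    Emat X ξ * Ggrp G a = Emat (X * G) (X *ᵥ a + ξ) := by
  ext i j
  rw [mul_apply, Fin.sum_univ_castSucc]
  induction i using Fin.lastCases with
  | last => simp [Emat_apply, Ggrp_apply]
  | cast i =>
    induction j using Fin.lastCases with
    | last => simp [Emat_apply, Ggrp_apply, mulVec, dotProduct]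
    | cast j => simp [Emat_apply, Ggrp_apply, mul_apply]

lemma Ggrp_mul_Ggrp (G : Matrix (Fin n) (Fin n) ℝ) (a : Fin n → ℝ)
    (H : Matrix (Fin n) (Fin n) ℝ) (b : Fin n → ℝ) :
    Ggrp G a * Ggrp H b = Ggrp (G * H) (G *ᵥ b + a) := by
  ext i j
  rw [mul_apply, Fin.sum_univ_castSucc]
  induction i using Fin.lastCases with
  | last =>
    induction j using Fin.lastCases with
    | last => simp [Ggrp_apply]
    | cast j => simp [Ggrp_apply]
  | cast i =>
    induction j using Fin.lastCases with
    | last => simp [Ggrp_apply, mulVec, dotProduct]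
    | cast j => simp [Ggrp_apply, mul_apply]

lemma Ggrp_one : Ggrp (1 : Matrix (Fin n) (Fin n) ℝ) 0 = 1 := by
  ext i j
  induction i using Fin.lastCases with
  | last =>
    induction j using Fin.lastCases with
    | last => simp [Ggrp_apply, one_apply]
    | cast j => simp [Ggrp_apply, one_apply, Fin.ext_iff, j.isLt.ne']
  | cast i =>
    induction j using Fin.lastCases with
    | last => simp [Ggrp_apply, one_apply, Fin.ext_iff, i.isLt.ne]
    | cast j => simp [Ggrp_apply, one_apply, Fin.ext_iff]

lemma Ggrp_inv (G H : Matrix (Fin n) (Fin n) ℝ) (a : Fin n → ℝ) (hGH : G * H = 1) :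
    (Ggrp G a)⁻¹ = Ggrp H (-(H *ᵥ a)) := by
  apply Matrix.inv_eq_right_inv
  rw [Ggrp_mul_Ggrp, hGH, mulVec_neg, mulVec_mulVec, hGH, one_mulVec, neg_add_cancel, Ggrp_one]

lemma Emat_inj {X Y : Matrix (Fin n) (Fin n) ℝ} {a b : Fin n → ℝ}
    (h : Emat X a = Emat Y b) : X = Y ∧ a = b := by
  constructor
  · ext i j
    have := congrFun (congrFun h i.castSucc) j.castSucc
    simpa [Emat_apply] using this
  · ext i
    have := congrFun (congrFun h i.castSucc) (Fin.last n)
    simpa [Emat_apply] using this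

lemma Emat_add (X Y : Matrix (Fin n) (Fin n) ℝ) (a b : Fin n → ℝ) :
    Emat X a + Emat Y b = Emat (X + Y) (a + b) := by
  ext i j
  by_cases hi : i.val < n <;> by_cases hj : j.val < n <;> simp [Emat_apply, hi, hj]

lemma Emat_smul (c : ℝ) (X : Matrix (Fin n) (Fin n) ℝ) (a : Fin n → ℝ) :
    c • Emat X a = Emat (c • X) (c • a) := by
  ext i j
  by_cases hi : i.val < n <;> by_cases hj : j.val < n <;> simp [Emat_apply, hi, hj]


lemma sum_indicator {n : ℕ} (t : ℕ) (f : Fin n → ℝ) :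
    (∑ l : Fin n, (if l.val = t then f l else 0)) = if h : t < n then f ⟨t, h⟩ else 0 := by
  split
  · next h =>
    rw [Finset.sum_eq_single ⟨t, h⟩]
    · simp
    · intro l _ hl
      rw [if_neg]
      intro hc; exact hl (Fin.ext hc)
    · simp
  · next h =>
    apply Finset.sum_eq_zero; intro l _
    rw [if_neg]
    intro hc; exact h (hc ▸ l.isLt)

lemma shift_pow_apply (n m : ℕ) (i j : Fin n) :
    (shiftMat n ^ m) i j = if j.val = i.val + m then 1 else 0 := by
  induction m generalizing i j with
  | zero => simp [one_apply, Fin.ext_iff, eq_comm]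
  | succ m ih =>
    rw [pow_succ, mul_apply]
    simp only [ih]
    simp only [shiftMat, of_apply, ite_mul, one_mul, zero_mul]
    have : ∀ l : Fin n, (if l.val = i.val + m then (if j.val = l.val + 1 then (1:ℝ) else 0) else 0)
        = (if l.val = i.val + m then (if j.val = i.val + m + 1 then (1:ℝ) else 0) else 0) := by
      intro l; split
      · next h => rw [h]
      · rfl
    rw [Finset.sum_congr rfl (fun l _ => this l), sum_indicator]
    split
    · rfl
    · next h =>
      rw [if_neg]
      omega
lemma shift_pow_mulVec (n m : ℕ) (v : Fin n → ℝ) (i : Fin n) :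
    ((shiftMat n ^ m) *ᵥ v) i = if h : i.val + m < n then v ⟨i.val + m, h⟩ else 0 := by
  rw [mulVec, dotProduct]
  simp only [shift_pow_apply, ite_mul, one_mul, zero_mul]
  exact sum_indicator (i.val + m) v

lemma shift_pow_mul_F (k : ℕ) (ε : ℝ) (d : ℕ) :
    shiftMat (2*k+1) ^ d * Fmat k ε = ((-1:ℝ))^d • (Fmat k ε * (shiftMat (2*k+1) ^ d)ᵀ) := by
  ext i j
  rw [Matrix.smul_apply, mul_apply, mul_apply]
  simp only [shift_pow_apply, Fmat, of_apply, transpose_apply, ite_mul, mul_ite, one_mul, zero_mul,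
    mul_zero, mul_one]
  have swap : ∀ (P Q : Prop) [Decidable P] [Decidable Q] (a : ℝ),
      (if P then if Q then a else 0 else 0) = (if Q then if P then a else 0 else 0) := by
    intro P Q _ _ a; split <;> split <;> simp_all
  have hL : ∀ x : Fin (2*k+1),
      (if x.val + j.val = 2 * k then if x.val = i.val + d then (-1:ℝ) ^ x.val * ε else 0 else 0)
      = (if x.val = i.val + d then (if x.val + j.val = 2 * k then (-1:ℝ) ^ x.val * ε else 0) else 0) := by
    intro x; exact swap _ _ _
  rw [Finset.sum_congr rfl (fun x _ => hL x), sum_indicator, sum_indicator]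
  simp only [Fin.val_mk]
  by_cases hc : i.val + j.val + d = 2 * k
  · rw [dif_pos (by omega : i.val + d < 2*k+1), dif_pos (by omega : j.val + d < 2*k+1),
      if_pos (by omega), if_pos (by omega), pow_add, smul_eq_mul]
    ring
  · split
    · rw [if_neg (by omega : ¬(i.val + d + j.val = 2*k))]
      split
      · rw [if_neg (by omega : ¬(i.val + (j.val + d) = 2*k)), smul_zero]
      · rw [smul_zero]
    · split
      · rw [if_neg (by omega : ¬(i.val + (j.val + d) = 2*k)), smul_zero]
      · rw [smul_zero]


section More
variable {n : ℕ}

lemma Emat_zero : Emat (0 : Matrix (Fin n) (Fin n) ℝ) 0 = 0 := by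
  ext i j
  by_cases hi : i.val < n <;> by_cases hj : j.val < n <;> simp [Emat_apply, hi, hj]

lemma Emat_sum {ι : Type*} (s : Finset ι) (f : ι → Matrix (Fin n) (Fin n) ℝ) (g : ι → Fin n → ℝ) :
    ∑ j ∈ s, Emat (f j) (g j) = Emat (∑ j ∈ s, f j) (∑ j ∈ s, g j) := by
  induction s using Finset.cons_induction with
  | empty => simpa using Emat_zero.symm
  | cons a s ha ih => rw [Finset.sum_cons, Finset.sum_cons, Finset.sum_cons, ih, Emat_add]

lemma P_pow_eq_Emat (m : ℕ) (hm : 1 ≤ m) :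
    shiftMat (n + 1) ^ m = Emat (shiftMat n ^ m) (fun i => if i.val + m = n then 1 else 0) := by
  ext i j
  rw [shift_pow_apply, Emat_apply]
  by_cases hi : i.val < n
  · rw [dif_pos hi]
    by_cases hj : j.val < n
    · rw [dif_pos hj, shift_pow_apply]
    · rw [dif_neg hj]
      have hjn : j.val = n := by omega
      by_cases h : i.val + m = n
      · rw [if_pos (by omega), if_pos h]
      · rw [if_neg (by omega), if_neg h]
  · rw [dif_neg hi]
    rw [if_neg (by omega)]

end More

section Sets
variable (k : ℕ)

/-- abbreviation for the small shift matrix -/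
noncomputable def Xc (c : Fin k → ℝ) : Matrix (Fin (2*k+1)) (Fin (2*k+1)) ℝ :=
  ∑ j : Fin k, c j • shiftMat (2 * k + 1) ^ (2 * j.val + 1)

noncomputable def wv (c : Fin k → ℝ) (v : Fin (2*k+1) → ℝ) : Fin (2*k+1) → ℝ :=
  ∑ j : Fin k, c j • ((shiftMat (2 * k + 1) ^ (2 * j.val)) *ᵥ v)

def Mv (v : Fin (2*k+1) → ℝ) : Set (Matrix (Fin (2*k+1+1)) (Fin (2*k+1+1)) ℝ) :=
  {m | ∃ (c : Fin k → ℝ) (α : ℝ), m = Emat (Xc k c) (wv k c v + α • e1 (2*k+1))}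

def elast : Fin (2*k+1) → ℝ := fun i => if i.val = 2 * k then 1 else 0

lemma Sset_eq : Sset k = Mv k 0 := by
  ext m
  constructor
  · rintro ⟨c, α, rfl⟩
    exact ⟨c, α, by simp [Xc, wv]⟩
  · rintro ⟨c, α, rfl⟩
    exact ⟨c, α, by simp [Xc, wv]⟩

lemma shift_pow_hi (d : ℕ) (hd : 2 * k + 1 ≤ d) :
    (shiftMat (2*k+1) : Matrix (Fin (2*k+1)) (Fin (2*k+1)) ℝ) ^ d = 0 := by
  ext i j
  rw [shift_pow_apply]
  rw [if_neg (by omega)]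
  rfl

lemma Mstar_sum (c : Fin (k+1) → ℝ) :
    ∑ j : Fin (k + 1), c j • shiftMat (2 * k + 1 + 1) ^ (2 * j.val + 1)
      = Emat (Xc k (c ∘ Fin.castSucc))
          (wv k (c ∘ Fin.castSucc) (elast k) + (c (Fin.last k)) • e1 (2*k+1)) := by
  rw [Fin.sum_univ_castSucc]
  have hlast : shiftMat (2 * k + 1 + 1) ^ (2 * (Fin.last k).val + 1)
      = Emat 0 (e1 (2*k+1)) := by
    have he : (fun i : Fin (2*k+1) => if i.val + (2 * k + 1) = 2 * k + 1 then (1:ℝ) else 0)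
        = e1 (2*k+1) := by
      funext i
      show _ = if i.val = 0 then (1:ℝ) else 0
      by_cases h : i.val = 0
      · rw [if_pos (by omega), if_pos h]
      · rw [if_neg (by omega), if_neg h]
    rw [P_pow_eq_Emat _ (by omega), Fin.val_last, shift_pow_hi k _ (by omega), he]
  have hsmul : ∀ j : Fin k, c j.castSucc • shiftMat (2 * k + 1 + 1) ^ (2 * j.castSucc.val + 1)
      = Emat (c j.castSucc • shiftMat (2*k+1) ^ (2 * j.val + 1))
             (c j.castSucc • ((shiftMat (2 * k + 1) ^ (2 * j.val)) *ᵥ elast k)) := by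
    intro j
    have hv : (fun i : Fin (2*k+1) => if i.val + (2 * j.val + 1) = 2 * k + 1 then (1:ℝ) else 0)
        = (shiftMat (2 * k + 1) ^ (2 * j.val)) *ᵥ elast k := by
      funext i
      rw [shift_pow_mulVec]
      by_cases h : i.val + 2 * j.val < 2 * k + 1
      · rw [dif_pos h]
        simp only [elast, Fin.val_mk]
        by_cases h2 : i.val + (2 * j.val + 1) = 2 * k + 1
        · rw [if_pos (by omega), if_pos (by omega)]
        · rw [if_neg (by omega), if_neg (by omega)]
      · rw [dif_neg h, if_neg (by omega)]
    rw [P_pow_eq_Emat _ (by omega), Fin.coe_castSucc, hv, Emat_smul]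
  calc (∑ j : Fin k, c j.castSucc • shiftMat (2 * k + 1 + 1) ^ (2 * j.castSucc.val + 1))
        + c (Fin.last k) • shiftMat (2 * k + 1 + 1) ^ (2 * (Fin.last k).val + 1)
      = (∑ j : Fin k, Emat (c j.castSucc • shiftMat (2*k+1) ^ (2 * j.val + 1))
             (c j.castSucc • ((shiftMat (2 * k + 1) ^ (2 * j.val)) *ᵥ elast k)))
        + c (Fin.last k) • Emat 0 (e1 (2*k+1)) := by
        rw [hlast, Finset.sum_congr rfl (fun j _ => hsmul j)]
    _ = _ := by
        rw [Emat_sum, Emat_smul, Emat_add, smul_zero, add_zero]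
        rfl

lemma Mstar_eq : Mstar k = Mv k (elast k) := by
  ext m
  constructor
  · rintro ⟨c, rfl⟩
    exact ⟨c ∘ Fin.castSucc, c (Fin.last k), Mstar_sum k c⟩
  · rintro ⟨c, α, rfl⟩
    refine ⟨Fin.snoc c α, ?_⟩
    have hc : (Fin.snoc c α : Fin (k+1) → ℝ) ∘ Fin.castSucc = c := by
      funext j; simp [Fin.snoc_castSucc]
    rw [Mstar_sum, hc, Fin.snoc_last]

lemma Xc_mem_oK (ε : ℝ) (c : Fin k → ℝ) : Xc k c ∈ oK (Fmat k ε) := by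
  show Xc k c * Fmat k ε + Fmat k ε * (Xc k c)ᵀ = 0
  rw [Xc, Finset.sum_mul, transpose_sum, Matrix.mul_sum, ← Finset.sum_add_distrib]
  apply Finset.sum_eq_zero
  intro j _
  rw [smul_mul_assoc, shift_pow_mul_F,
    Odd.neg_one_pow (⟨j.val, by ring⟩ : Odd (2 * j.val + 1)),
    transpose_smul, mul_smul_comm, smul_smul, ← add_smul]
  norm_num

lemma Mv_subset_eK (ε : ℝ) (v : Fin (2*k+1) → ℝ) : Mv k v ⊆ eK (Fmat k ε) := by
  rintro m ⟨c, α, rfl⟩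
  exact ⟨Xc k c, Xc_mem_oK k ε c, _, rfl⟩

end Sets

section Structure

lemma mulVec_sum' {m : Type*} [Fintype m] (A : Matrix m m ℝ) {ι : Type*} (s : Finset ι)
    (g : ι → m → ℝ) : A *ᵥ (∑ j ∈ s, g j) = ∑ j ∈ s, A *ᵥ g j := by
  induction s using Finset.cons_induction with
  | empty => simp
  | cons a s ha ih => rw [Finset.sum_cons, Finset.sum_cons, mulVec_add, ih]

lemma ker_shift {n : ℕ} (hn : 0 < n) (u : Fin n → ℝ) (h : shiftMat n *ᵥ u = 0) :
    u = u ⟨0, hn⟩ • e1 n := by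
  funext i
  show u i = u ⟨0, hn⟩ * e1 n i
  by_cases hi : i.val = 0
  · have hieq : i = ⟨0, hn⟩ := Fin.ext hi
    rw [hieq]
    have : e1 n ⟨0, hn⟩ = 1 := by simp [e1]
    rw [this, mul_one]
  · have key := congrFun h ⟨i.val - 1, by omega⟩
    rw [← pow_one (shiftMat n), shift_pow_mulVec] at key
    rw [dif_pos (by simp only [Fin.val_mk]; omega : (⟨i.val - 1, by omega⟩ : Fin n).val + 1 < n)] at key
    have hieq : (⟨(⟨i.val - 1, by omega⟩ : Fin n).val + 1, by simp only [Fin.val_mk]; omega⟩ : Fin n) = i :=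
      Fin.ext (by simp only [Fin.val_mk]; omega)
    rw [hieq] at key
    rw [key]
    have : e1 n i = 0 := by simp [e1, hi]
    rw [this, mul_zero]
    rfl

lemma comm_extract {n : ℕ} {X Y : Matrix (Fin n) (Fin n) ℝ} {ξ η : Fin n → ℝ}
    (h : Emat X ξ * Emat Y η = Emat Y η * Emat X ξ) : X *ᵥ η = Y *ᵥ ξ := by
  rw [Emat_mul_Emat, Emat_mul_Emat] at h
  exact (Emat_inj h).2

lemma sum_mulVec'' {m : Type*} [Fintype m] {ι : Type*} (s : Finset ι)
    (A : ι → Matrix m m ℝ) (v : m → ℝ) :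
    (∑ j ∈ s, A j) *ᵥ v = ∑ j ∈ s, A j *ᵥ v := by
  induction s using Finset.cons_induction with
  | empty => simp
  | cons a s ha ih => rw [Finset.sum_cons, Finset.sum_cons, add_mulVec, ih]

lemma Xc_mulVec (k : ℕ) (c : Fin k → ℝ) (v : Fin (2*k+1) → ℝ) :
    Xc k c *ᵥ v = shiftMat (2*k+1) *ᵥ wv k c v := by
  rw [Xc, wv, sum_mulVec'', mulVec_sum']
  apply Finset.sum_congr rfl
  intro j _
  rw [smul_mulVec, mulVec_smul, mulVec_mulVec, ← pow_succ']

lemma M_structure (k : ℕ) (hk : 1 ≤ k) (ε : ℝ)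
    (M : Set (Matrix (Fin (2*k+1+1)) (Fin (2*k+1+1)) ℝ))
    (hM : IsMASA (eK (Fmat k ε)) M)
    (hproj : {X | ∃ ξ : Fin (2*k+1) → ℝ, Emat X ξ ∈ M} = Aset k)
    (htr : M ∩ {m | ∃ a : Fin (2*k+1) → ℝ,
          m = Emat (0 : Matrix (Fin (2*k+1)) (Fin (2*k+1)) ℝ) a} =
        {m | ∃ c : ℝ, m = Emat (0 : Matrix (Fin (2*k+1)) (Fin (2*k+1)) ℝ) (c • e1 (2*k+1))}) :
    ∃ v : Fin (2*k+1) → ℝ, M = Mv k v := by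
  obtain ⟨hsub, hcomm, hzero, hadd, hsmul, hmax⟩ := hM
  -- E(0, e1) ∈ M
  have hE0 : Emat (0 : Matrix (Fin (2*k+1)) (Fin (2*k+1)) ℝ) (e1 (2*k+1)) ∈ M := by
    have h1 : Emat (0 : Matrix (Fin (2*k+1)) (Fin (2*k+1)) ℝ) (e1 (2*k+1))
        ∈ {m | ∃ c : ℝ, m = Emat (0 : Matrix (Fin (2*k+1)) (Fin (2*k+1)) ℝ) (c • e1 (2*k+1))} :=
      ⟨1, by rw [one_smul]⟩
    rw [← htr] at h1
    exact h1.1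
  -- find v with E(p, v) ∈ M
  have hp : shiftMat (2*k+1) ^ (2 * (⟨0, hk⟩ : Fin k).val + 1) ∈ Aset k := by
    refine ⟨Pi.single ⟨0, hk⟩ 1, ?_⟩
    rw [Finset.sum_eq_single (⟨0, hk⟩ : Fin k)]
    · rw [Pi.single_eq_same, one_smul]
    · intro b _ hb
      rw [Pi.single_eq_of_ne hb, zero_smul]
    · simp
  rw [← hproj] at hp
  obtain ⟨v, hv⟩ := hp
  rw [show (2 * (⟨0, hk⟩ : Fin k).val + 1) = 1 by simp, pow_one] at hv
  -- the key decomposition for members of M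
  have key : ∀ X (ξ : Fin (2*k+1) → ℝ), Emat X ξ ∈ M → ∀ c : Fin k → ℝ, X = Xc k c →
      ∃ α : ℝ, ξ = wv k c v + α • e1 (2*k+1) := by
    intro X ξ hmem c hXc
    have hcom := hcomm _ hmem _ hv
    have h2 := comm_extract hcom
    -- X *ᵥ v = p^(1) *ᵥ ξ
    have h3 : shiftMat (2*k+1) *ᵥ (ξ - wv k c v) = 0 := by
      have hX : X *ᵥ v = shiftMat (2*k+1) *ᵥ wv k c v := by rw [hXc]; exact Xc_mulVec k c v
      rw [mulVec_sub, ← hX, h2]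
      exact sub_self _
    have h4 := ker_shift (by omega) _ h3
    exact ⟨(ξ - wv k c v) ⟨0, by omega⟩, by rw [← h4]; ring⟩
  refine ⟨v, Set.ext fun m => ⟨?_, ?_⟩⟩
  · intro hm
    obtain ⟨X, hXo, ξ, rfl⟩ := hsub hm
    have hXA : X ∈ Aset k := by rw [← hproj]; exact ⟨ξ, hm⟩
    obtain ⟨c, rfl⟩ := hXA
    obtain ⟨α, hα⟩ := key _ ξ hm c rfl
    exact ⟨c, α, by rw [hα]; rfl⟩
  · rintro ⟨c, α, rfl⟩
    have hXA : Xc k c ∈ Aset k := ⟨c, rfl⟩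
    rw [← hproj] at hXA
    obtain ⟨ξ, hξ⟩ := hXA
    obtain ⟨β, hβ⟩ := key _ ξ hξ c rfl
    have hvec : wv k c v + α • e1 (2*k+1) = ξ + (α - β) • e1 (2*k+1) := by
      rw [hβ, add_assoc, ← add_smul, show β + (α - β) = α by ring]
    have : Emat (Xc k c) (wv k c v + α • e1 (2*k+1))
        = Emat (Xc k c) ξ + (α - β) • Emat 0 (e1 (2*k+1)) := by
      rw [Emat_smul, smul_zero, Emat_add, add_zero, hvec]
    rw [this]
    exact hadd _ hξ _ (hsmul _ _ hE0)

end Structure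

section Conj
variable (k : ℕ)

noncomputable def dvec (s t : ℝ) : Fin (2*k+1) → ℝ := fun i => t * s ^ ((k : ℤ) - (i.val : ℤ))

noncomputable def Dg (s t : ℝ) : Matrix (Fin (2*k+1)) (Fin (2*k+1)) ℝ :=
  Matrix.diagonal (dvec k s t)

noncomputable def Dg' (s t : ℝ) : Matrix (Fin (2*k+1)) (Fin (2*k+1)) ℝ :=
  Matrix.diagonal (fun i => (dvec k s t i)⁻¹)

variable {s t : ℝ}

lemma dvec_ne (hs : s ≠ 0) (ht : t ≠ 0) (i : Fin (2*k+1)) : dvec k s t i ≠ 0 :=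
  mul_ne_zero ht (zpow_ne_zero _ hs)

lemma Dg_mul_Dg' (hs : s ≠ 0) (ht : t ≠ 0) : Dg k s t * Dg' k s t = 1 := by
  rw [Dg, Dg', diagonal_mul_diagonal]
  rw [show (fun i => dvec k s t i * (dvec k s t i)⁻¹) = fun _ => (1:ℝ) from
    funext fun i => mul_inv_cancel₀ (dvec_ne k hs ht i)]
  exact Matrix.diagonal_one

lemma Dg_mul_shift_pow (hs : s ≠ 0) (ht : t ≠ 0) (m : ℕ) :
    Dg k s t * shiftMat (2*k+1) ^ m * Dg' k s t = (s ^ m) • shiftMat (2*k+1) ^ m := by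
  ext i j
  rw [Dg, Dg', mul_diagonal, diagonal_mul, Matrix.smul_apply, shift_pow_apply]
  by_cases h : j.val = i.val + m
  · rw [if_pos h, mul_one, smul_eq_mul, mul_one]
    show t * s ^ ((k:ℤ) - i.val) * (t * s ^ ((k:ℤ) - j.val))⁻¹ = s ^ m
    rw [mul_inv, ← _root_.zpow_neg]
    have harr : t * s ^ ((k:ℤ) - i.val) * (t⁻¹ * s ^ (-((k:ℤ) - j.val)))
        = (t * t⁻¹) * (s ^ ((k:ℤ) - i.val) * s ^ (-((k:ℤ) - j.val))) := by ring
    rw [harr, mul_inv_cancel₀ ht, one_mul, ← zpow_add₀ hs,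
      show ((k:ℤ) - i.val + -((k:ℤ) - j.val)) = (m:ℤ) by omega, zpow_natCast]
  · rw [if_neg h, mul_zero, zero_mul, smul_eq_mul, mul_zero]

lemma Dg_mulVec_shift (hs : s ≠ 0) (m : ℕ) (u : Fin (2*k+1) → ℝ) :
    Dg k s t *ᵥ (shiftMat (2*k+1) ^ m *ᵥ u)
      = s ^ m • (shiftMat (2*k+1) ^ m *ᵥ (Dg k s t *ᵥ u)) := by
  funext i
  rw [Dg, mulVec_diagonal, shift_pow_mulVec, Pi.smul_apply, shift_pow_mulVec]
  by_cases h : i.val + m < 2*k+1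
  · rw [dif_pos h, dif_pos h, mulVec_diagonal]
    have hd : dvec k s t i = s ^ m * dvec k s t ⟨i.val + m, h⟩ := by
      show t * s ^ ((k:ℤ) - i.val) = s ^ m * (t * s ^ ((k:ℤ) - (⟨i.val + m, h⟩ : Fin (2*k+1)).val))
      rw [show ((k:ℤ) - ((⟨i.val + m, h⟩ : Fin (2*k+1)).val : ℤ))
          = (k:ℤ) - i.val - m by simp only [Fin.val_mk]; push_cast; ring,
        show ((k:ℤ) - (i.val:ℤ)) = (m:ℤ) + ((k:ℤ) - i.val - m) by ring,
        zpow_add₀ hs, zpow_natCast]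
      ring
    rw [hd, smul_eq_mul]
    ring
  · rw [dif_neg h, dif_neg h, mul_zero, smul_eq_mul, mul_zero]

lemma Dg_mulVec_e1 : Dg k s t *ᵥ e1 (2*k+1) = (t * s ^ (k:ℤ)) • e1 (2*k+1) := by
  funext i
  rw [Dg, mulVec_diagonal, Pi.smul_apply]
  by_cases h : i.val = 0
  · have he : e1 (2*k+1) i = 1 := by simp [e1, h]
    rw [he, mul_one, smul_eq_mul, mul_one]
    show t * s ^ ((k:ℤ) - (i.val:ℤ)) = t * s ^ (k:ℤ)
    rw [h]
    norm_num
  · have : e1 (2*k+1) i = 0 := by simp [e1, h]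
    rw [this, mul_zero, smul_eq_mul, mul_zero]

lemma Dg_mulVec_elast : Dg k s t *ᵥ elast k = (t * s ^ (-(k:ℤ))) • elast k := by
  funext i
  rw [Dg, mulVec_diagonal, Pi.smul_apply]
  by_cases h : i.val = 2 * k
  · have he : elast k i = 1 := by simp [elast, h]
    rw [he, mul_one, smul_eq_mul, mul_one]
    show t * s ^ ((k:ℤ) - (i.val:ℤ)) = _
    rw [h]
    congr 1
    push_cast
    ring
  · have : elast k i = 0 := by simp [elast, h]
    rw [this, mul_zero, smul_eq_mul, mul_zero]

lemma wv_sub (c : Fin k → ℝ) (x y : Fin (2*k+1) → ℝ) :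
    wv k c (x - y) = wv k c x - wv k c y := by
  rw [wv, wv, wv, ← Finset.sum_sub_distrib]
  apply Finset.sum_congr rfl
  intro j _
  rw [mulVec_sub, smul_sub]

lemma wv_smul_vec (c : Fin k → ℝ) (r : ℝ) (x : Fin (2*k+1) → ℝ) :
    wv k c (r • x) = r • wv k c x := by
  rw [wv, wv, Finset.smul_sum]
  apply Finset.sum_congr rfl
  intro j _
  rw [mulVec_smul, smul_comm]

lemma wv_shift (c : Fin k → ℝ) (a : Fin (2*k+1) → ℝ) :
    wv k c (shiftMat (2*k+1) *ᵥ a) = Xc k c *ᵥ a := by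
  rw [wv, Xc, sum_mulVec'']
  apply Finset.sum_congr rfl
  intro j _
  rw [smul_mulVec, mulVec_mulVec, ← pow_succ]

lemma Dg_mulVec_wv (hs : s ≠ 0) (c : Fin k → ℝ) (v : Fin (2*k+1) → ℝ) :
    Dg k s t *ᵥ wv k c v
      = s⁻¹ • wv k (fun j => s ^ (2 * j.val + 1) * c j) (Dg k s t *ᵥ v) := by
  rw [wv, wv, mulVec_sum', Finset.smul_sum]
  apply Finset.sum_congr rfl
  intro j _
  rw [mulVec_smul, Dg_mulVec_shift k hs, smul_smul, smul_smul]
  congr 1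
  rw [pow_succ]
  field_simp

lemma conj_elem (hs : s ≠ 0) (ht : t ≠ 0) (a v : Fin (2*k+1) → ℝ)
    (c : Fin k → ℝ) (α : ℝ) (c'' : Fin k → ℝ) (α'' : ℝ)
    (hc : c'' = fun j => s ^ (2 * j.val + 1) * c j) (hα : α'' = α * (t * s ^ (k:ℤ))) :
    Ggrp (Dg k s t) a * Emat (Xc k c) (wv k c v + α • e1 (2*k+1)) * (Ggrp (Dg k s t) a)⁻¹
      = Emat (Xc k c'')
          (wv k c'' (s⁻¹ • (Dg k s t *ᵥ v) - shiftMat (2*k+1) *ᵥ a) + α'' • e1 (2*k+1)) := by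
  subst hc hα
  rw [Ggrp_inv _ _ _ (Dg_mul_Dg' k hs ht), Ggrp_mul_Emat, Emat_mul_Ggrp]
  have h1 : Dg k s t * Xc k c * Dg' k s t = Xc k (fun j => s ^ (2 * j.val + 1) * c j) := by
    rw [Xc, Xc, Matrix.mul_sum, Finset.sum_mul]
    apply Finset.sum_congr rfl
    intro j _
    rw [mul_smul_comm, smul_mul_assoc, Dg_mul_shift_pow k hs ht, smul_smul, mul_comm (c j)]
  have h2 : (Dg k s t * Xc k c) *ᵥ (-(Dg' k s t *ᵥ a)) + Dg k s t *ᵥ (wv k c v + α • e1 (2*k+1))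
      = wv k (fun j => s ^ (2 * j.val + 1) * c j)
          (s⁻¹ • (Dg k s t *ᵥ v) - shiftMat (2*k+1) *ᵥ a) + (α * (t * s ^ (k:ℤ))) • e1 (2*k+1) := by
    rw [mulVec_neg, mulVec_mulVec]
    rw [wv_sub, wv_smul_vec, wv_shift, ← Dg_mulVec_wv k hs]
    rw [mulVec_add, mulVec_smul, Dg_mulVec_e1, h1, smul_smul, mul_comm α]
    abel
  rw [h1, h2]

lemma conj_Mv (hs : s ≠ 0) (ht : t ≠ 0) (a v : Fin (2*k+1) → ℝ) :
    (fun m => Ggrp (Dg k s t) a * m * (Ggrp (Dg k s t) a)⁻¹) '' (Mv k v)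
      = Mv k (s⁻¹ • (Dg k s t *ᵥ v) - shiftMat (2*k+1) *ᵥ a) := by
  have hts : t * s ^ (k:ℤ) ≠ 0 := mul_ne_zero ht (zpow_ne_zero _ hs)
  ext m
  constructor
  · rintro ⟨_, ⟨c, α, rfl⟩, rfl⟩
    exact ⟨_, _, conj_elem k hs ht a v c α _ _ rfl rfl⟩
  · rintro ⟨c', α', rfl⟩
    refine ⟨Emat (Xc k (fun j => c' j / s ^ (2 * j.val + 1)))
      (wv k (fun j => c' j / s ^ (2 * j.val + 1)) v + (α' / (t * s ^ (k:ℤ))) • e1 (2*k+1)),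
      ⟨_, _, rfl⟩, ?_⟩
    exact conj_elem k hs ht a v _ _ c' α'
      (funext fun j => by field_simp)
      (div_mul_cancel₀ α' hts).symm

lemma Dg_F (hs : s ≠ 0) (htt : t * t = 1) (ε : ℝ) :
    Dg k s t * Fmat k ε * (Dg k s t)ᵀ = Fmat k ε := by
  ext i j
  rw [Dg, diagonal_transpose, mul_diagonal, diagonal_mul]
  show dvec k s t i * Fmat k ε i j * dvec k s t j = Fmat k ε i j
  by_cases h : i.val + j.val = 2 * k
  · have hdd : dvec k s t i * dvec k s t j = 1 := by
      show (t * s ^ ((k:ℤ) - i.val)) * (t * s ^ ((k:ℤ) - j.val)) = 1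
      calc (t * s ^ ((k:ℤ) - i.val)) * (t * s ^ ((k:ℤ) - j.val))
          = (t * t) * (s ^ ((k:ℤ) - i.val) * s ^ ((k:ℤ) - j.val)) := by ring
        _ = (t * t) * s ^ (((k:ℤ) - i.val) + ((k:ℤ) - j.val)) := by rw [← zpow_add₀ hs]
        _ = 1 := by
            rw [htt, show (((k:ℤ) - i.val) + ((k:ℤ) - j.val)) = 0 by omega, zpow_zero, one_mul]
    calc dvec k s t i * Fmat k ε i j * dvec k s t j
        = Fmat k ε i j * (dvec k s t i * dvec k s t j) := by ring
      _ = Fmat k ε i j := by rw [hdd, mul_one]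
  · have : Fmat k ε i j = 0 := by simp [Fmat, h]
    rw [this, mul_zero, zero_mul]

lemma liftA_spec (w : Fin (2*k+1) → ℝ) (hw : w ⟨2*k, by omega⟩ = 0) :
    shiftMat (2*k+1) *ᵥ (fun i : Fin (2*k+1) =>
      if h : i.val = 0 then 0 else w ⟨i.val - 1, by omega⟩) = w := by
  funext i
  rw [← pow_one (shiftMat (2*k+1)), shift_pow_mulVec]
  by_cases h : i.val + 1 < 2*k+1
  · rw [dif_pos h]
    rw [dif_neg (by simp only [Fin.val_mk]; omega : ¬((⟨i.val+1, h⟩ : Fin (2*k+1)).val = 0))]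
    congr 1
  · rw [dif_neg h]
    have : i = ⟨2*k, by omega⟩ := Fin.ext (by simp only [Fin.val_mk]; omega)
    rw [this, hw]

end Conj


section Toeplitz

lemma comm_shift_rel {n : ℕ} (Y : Matrix (Fin n) (Fin n) ℝ)
    (h : Y * shiftMat n = shiftMat n * Y) (i j : Fin n) :
    (if hj : 1 ≤ j.val then Y i ⟨j.val - 1, by omega⟩ else 0)
      = (if h2 : i.val + 1 < n then Y ⟨i.val + 1, h2⟩ j else 0) := by
  have hh := congrFun (congrFun h i) j
  rw [mul_apply, mul_apply] at hh
  have hL : (∑ l : Fin n, Y i l * shiftMat n l j)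
      = (if hj : 1 ≤ j.val then Y i ⟨j.val - 1, by omega⟩ else 0) := by
    have hterm : ∀ l : Fin n, Y i l * shiftMat n l j
        = if l.val = j.val - 1 then (if 1 ≤ j.val then Y i l else 0) else 0 := by
      intro l
      show Y i l * (if j.val = l.val + 1 then 1 else 0) = _
      by_cases hc : j.val = l.val + 1
      · rw [if_pos hc, if_pos (by omega), if_pos (by omega), mul_one]
      · rw [if_neg hc]
        by_cases hc2 : l.val = j.val - 1
        · rw [if_pos hc2, if_neg (by omega), mul_zero]
        · rw [if_neg hc2, mul_zero]
    rw [Finset.sum_congr rfl (fun l _ => hterm l), sum_indicator,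
      dif_pos (by omega : j.val - 1 < n)]
    by_cases hj : 1 ≤ j.val
    · rw [if_pos hj, dif_pos hj]
    · rw [if_neg hj, dif_neg hj]
  have hR : (∑ l : Fin n, shiftMat n i l * Y l j)
      = (if h2 : i.val + 1 < n then Y ⟨i.val + 1, h2⟩ j else 0) := by
    have hterm : ∀ l : Fin n, shiftMat n i l * Y l j
        = if l.val = i.val + 1 then Y l j else 0 := by
      intro l
      show (if l.val = i.val + 1 then (1:ℝ) else 0) * Y l j = _
      split <;> simp
    rw [Finset.sum_congr rfl (fun l _ => hterm l), sum_indicator]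
  rw [← hL, ← hR, hh]

lemma toeplitz_upper {n : ℕ} (Y : Matrix (Fin (n+1)) (Fin (n+1)) ℝ)
    (h : Y * shiftMat (n+1) = shiftMat (n+1) * Y) :
    ∀ (m : ℕ) (i j : Fin (n+1)), i.val = m → i.val ≤ j.val →
      Y i j = Y ⟨0, by omega⟩ ⟨j.val - i.val, by omega⟩ := by
  intro m
  induction m with
  | zero =>
    intro i j h0 hij
    have hi : i = ⟨0, by omega⟩ := Fin.ext h0
    have hj : j = ⟨j.val - i.val, by omega⟩ := Fin.ext (by simp only [Fin.val_mk]; omega)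
    conv_lhs => rw [hi, hj]
  | succ m ih =>
    intro i j him hij
    have h1 : 1 ≤ j.val := by omega
    have rel := comm_shift_rel Y h ⟨m, by omega⟩ j
    rw [dif_pos h1, dif_pos (by simp only [Fin.val_mk]; omega :
      (⟨m, by omega⟩ : Fin (n+1)).val + 1 < n + 1)] at rel
    have hi : i = ⟨(⟨m, by omega⟩ : Fin (n+1)).val + 1, by simp only [Fin.val_mk]; omega⟩ :=
      Fin.ext (by simp only [Fin.val_mk]; omega)
    rw [hi, ← rel]
    have step := ih ⟨m, by omega⟩ ⟨j.val - 1, by omega⟩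
      (by simp only [Fin.val_mk]) (by simp only [Fin.val_mk]; omega)
    rw [step]
    congr 1
    apply Fin.ext
    simp only [Fin.val_mk]
    omega

lemma toeplitz_lower {n : ℕ} (Y : Matrix (Fin (n+1)) (Fin (n+1)) ℝ)
    (h : Y * shiftMat (n+1) = shiftMat (n+1) * Y) :
    ∀ (m : ℕ) (i j : Fin (n+1)), i.val + m = n → j.val < i.val → Y i j = 0 := by
  intro m
  induction m with
  | zero =>
    intro i j h0 hij
    have rel := comm_shift_rel Y h i ⟨j.val + 1, by omega⟩
    rw [dif_pos (by simp only [Fin.val_mk]; omega), dif_neg (by omega)] at rel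
    have hj : (⟨(⟨j.val + 1, by omega⟩ : Fin (n+1)).val - 1, by omega⟩ : Fin (n+1)) = j :=
      Fin.ext (by simp only [Fin.val_mk]; omega)
    rw [hj] at rel
    exact rel
  | succ m ih =>
    intro i j h0 hij
    have rel := comm_shift_rel Y h i ⟨j.val + 1, by omega⟩
    rw [dif_pos (by simp only [Fin.val_mk]; omega), dif_pos (by omega : i.val + 1 < n + 1)] at rel
    have hj : (⟨(⟨j.val + 1, by omega⟩ : Fin (n+1)).val - 1, by omega⟩ : Fin (n+1)) = j :=
      Fin.ext (by simp only [Fin.val_mk]; omega)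
    rw [hj] at rel
    rw [rel]
    exact ih ⟨i.val + 1, by omega⟩ ⟨j.val + 1, by omega⟩
      (by simp only [Fin.val_mk]; omega) (by simp only [Fin.val_mk]; omega)

lemma centralizer_in_Mstar (k : ℕ) (ε : ℝ) (hε : ε ≠ 0)
    (Y : Matrix (Fin (2*k+1+1)) (Fin (2*k+1+1)) ℝ) (hY : Y ∈ eK (Fmat k ε))
    (hcomm : Y * shiftMat (2*k+1+1) = shiftMat (2*k+1+1) * Y) : Y ∈ Mstar k := by
  obtain ⟨X, hXo, a, rfl⟩ := hY
  set Y := Emat X a with hYdef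
  have upper := toeplitz_upper Y hcomm
  have lower := toeplitz_lower Y hcomm
  have hbot : ∀ j : Fin (2*k+1+1), Y (Fin.last (2*k+1)) j = 0 := by
    intro j
    show Emat X a (Fin.last (2*k+1)) j = 0
    rw [Emat_apply, dif_neg (by simp [Fin.val_last])]
  have hXentry : ∀ (i j : ℕ) (hi : i < 2*k+1) (hj : j < 2*k+1),
      X ⟨i, hi⟩ ⟨j, hj⟩ = Y ⟨i, by omega⟩ ⟨j, by omega⟩ := by
    intro i j hi hj
    show _ = Emat X a _ _
    rw [Emat_apply, dif_pos (by simp only [Fin.val_mk]; omega : ((⟨i, by omega⟩ : Fin (2*k+1+1))).val < 2*k+1)]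
    rw [dif_pos (by simp only [Fin.val_mk]; omega : ((⟨j, by omega⟩ : Fin (2*k+1+1))).val < 2*k+1)]
  have heven : ∀ (d : ℕ) (hd : d ≤ 2*k), d % 2 = 0 → Y ⟨0, by omega⟩ ⟨d, by omega⟩ = 0 := by
    intro d hd hdeven
    by_cases hd0 : d = 0
    · subst hd0
      have h1 := upper (2*k+1) ⟨2*k+1, by omega⟩ ⟨2*k+1, by omega⟩
        (by simp only [Fin.val_mk]) le_rfl
      have h2 : Y (⟨2*k+1, by omega⟩ : Fin (2*k+1+1)) ⟨2*k+1, by omega⟩ = 0 := hbot _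
      rw [h2] at h1
      have e0 : (⟨((⟨2*k+1, by omega⟩ : Fin (2*k+1+1))).val
            - ((⟨2*k+1, by omega⟩ : Fin (2*k+1+1))).val, by omega⟩ : Fin (2*k+1+1))
          = ⟨0, by omega⟩ := Fin.ext (by simp only [Fin.val_mk]; omega)
      rw [e0] at h1
      exact h1.symm
    · have hXo' : X * Fmat k ε + Fmat k ε * Xᵀ = 0 := hXo
      have hrel := congrFun (congrFun hXo' ⟨0, by omega⟩) ⟨2*k - d, by omega⟩
      rw [Matrix.add_apply, mul_apply, mul_apply, Matrix.zero_apply] at hrel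
      have hterm1 : ∀ l : Fin (2*k+1), X ⟨0, by omega⟩ l * Fmat k ε l ⟨2*k - d, by omega⟩
          = if l.val = d then X ⟨0, by omega⟩ l * ((-1:ℝ)^d * ε) else 0 := by
        intro l
        show X _ l * (if l.val + (⟨2*k - d, by omega⟩ : Fin (2*k+1)).val = 2*k
          then (-1:ℝ)^l.val * ε else 0) = _
        simp only [Fin.val_mk]
        by_cases hc : l.val = d
        · rw [if_pos (by omega), if_pos hc, hc]
        · rw [if_neg (by omega), if_neg hc, mul_zero]
      have hterm2 : ∀ l : Fin (2*k+1), Fmat k ε ⟨0, by omega⟩ l * Xᵀ l ⟨2*k - d, by omega⟩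
          = if l.val = 2*k then ε * X ⟨2*k - d, by omega⟩ l else 0 := by
        intro l
        show (if (⟨0, by omega⟩ : Fin (2*k+1)).val + l.val = 2*k
            then (-1:ℝ)^(⟨0, by omega⟩ : Fin (2*k+1)).val * ε else 0) * X _ l = _
        simp only [Fin.val_mk, pow_zero, one_mul, zero_add]
        by_cases hc : l.val = 2*k
        · rw [if_pos (by omega), if_pos hc, mul_comm]
        · rw [if_neg (by omega), if_neg hc, zero_mul]
      rw [Finset.sum_congr rfl (fun l _ => hterm1 l),
        Finset.sum_congr rfl (fun l _ => hterm2 l), sum_indicator, sum_indicator,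
        dif_pos (by omega : d < 2*k+1), dif_pos (by omega : 2*k < 2*k+1)] at hrel
      rw [hXentry 0 d (by omega) (by omega),
        hXentry (2*k - d) (2*k) (by omega) (by omega)] at hrel
      have hup := upper (2*k - d) ⟨2*k - d, by omega⟩ ⟨2*k, by omega⟩
        (by simp only [Fin.val_mk]) (by simp only [Fin.val_mk]; omega)
      have ed : (⟨((⟨2*k, by omega⟩ : Fin (2*k+1+1))).val
            - ((⟨2*k - d, by omega⟩ : Fin (2*k+1+1))).val, by omega⟩ : Fin (2*k+1+1))
          = ⟨d, by omega⟩ := Fin.ext (by simp only [Fin.val_mk]; omega)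
      rw [ed] at hup
      rw [hup] at hrel
      have hpow : (-1:ℝ)^d = 1 := Even.neg_one_pow (Nat.even_iff.mpr hdeven)
      rw [hpow, one_mul] at hrel
      have h2 : (2 * ε) * Y ⟨0, by omega⟩ ⟨d, by omega⟩ = 0 := by linarith
      exact (mul_eq_zero.mp h2).resolve_left (mul_ne_zero two_ne_zero hε)
  refine ⟨fun j => Y ⟨0, by omega⟩ ⟨2 * j.val + 1, by omega⟩, ?_⟩
  ext i j'
  rw [Matrix.sum_apply]
  have hterm : ∀ jj : Fin (k+1),
      (Y ⟨0, by omega⟩ ⟨2 * jj.val + 1, by omega⟩ • shiftMat (2*k+1+1) ^ (2 * jj.val + 1)) i j'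
      = if j'.val = i.val + (2 * jj.val + 1)
          then Y ⟨0, by omega⟩ ⟨2 * jj.val + 1, by omega⟩ else 0 := by
    intro jj
    rw [Matrix.smul_apply, shift_pow_apply, smul_eq_mul]
    split
    · rw [mul_one]
    · rw [mul_zero]
  rw [Finset.sum_congr rfl (fun jj _ => hterm jj)]
  by_cases hij : i.val ≤ j'.val
  · by_cases hodd : (j'.val - i.val) % 2 = 1
    · have ht : (j'.val - i.val) / 2 < k + 1 := by omega
      rw [Finset.sum_eq_single (⟨(j'.val - i.val) / 2, ht⟩ : Fin (k+1))]
      · rw [if_pos (by simp only [Fin.val_mk]; omega)]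
        rw [upper i.val i j' rfl hij]
        congr 1
        apply Fin.ext
        simp only [Fin.val_mk]
        omega
      · intro b _ hb
        have hbv : b.val ≠ (j'.val - i.val) / 2 := fun hc => hb (Fin.ext hc)
        rw [if_neg (by omega)]
      · simp
    · rw [Finset.sum_eq_zero]
      · rw [upper i.val i j' rfl hij]
        exact heven (j'.val - i.val) (by omega) (by omega)
      · intro b _
        rw [if_neg (by omega)]
  · rw [Finset.sum_eq_zero]
    · exact lower (2*k+1 - i.val) i j' (by omega) (by omega)
    · intro b _
      rw [if_neg (by omega)]
end Toeplitz

section Final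

lemma shift_mem_Mstar (k : ℕ) : shiftMat (2*k+1+1) ∈ Mstar k := by
  refine ⟨Pi.single 0 1, ?_⟩
  rw [Finset.sum_eq_single (0 : Fin (k+1))]
  · rw [Pi.single_eq_same, one_smul, Fin.val_zero]
    norm_num
  · intro b _ hb
    rw [Pi.single_eq_of_ne hb, zero_smul]
  · simp

lemma Mstar_isMASA (k : ℕ) (ε : ℝ) (hε : ε ≠ 0) : IsMASA (eK (Fmat k ε)) (Mstar k) := by
  refine ⟨?_, ?_, ?_, ?_, ?_, ?_⟩
  · rw [Mstar_eq]
    exact Mv_subset_eK k ε _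
  · rintro _ ⟨c, rfl⟩ _ ⟨c', rfl⟩
    rw [Finset.sum_mul_sum, Finset.sum_mul_sum, Finset.sum_comm]
    apply Finset.sum_congr rfl
    intro i _
    apply Finset.sum_congr rfl
    intro j _
    rw [smul_mul_smul_comm, smul_mul_smul_comm, ← pow_add, ← pow_add,
      mul_comm (c j), Nat.add_comm (2 * j.val + 1)]
  · exact ⟨fun _ => 0, by simp⟩
  · rintro _ ⟨c, rfl⟩ _ ⟨c', rfl⟩
    refine ⟨c + c', ?_⟩
    rw [← Finset.sum_add_distrib]
    apply Finset.sum_congr rfl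
    intro j _
    rw [Pi.add_apply, add_smul]
  · rintro r _ ⟨c, rfl⟩
    refine ⟨r • c, ?_⟩
    rw [Finset.smul_sum]
    apply Finset.sum_congr rfl
    intro j _
    rw [Pi.smul_apply, smul_smul, smul_eq_mul]
  · intro Y hY hcom
    exact centralizer_in_Mstar k ε hε Y hY (hcom _ (shift_mem_Mstar k))

lemma coeff_eq (k : ℕ) (μ : ℝ) (hμ : μ ≠ 0) :
    let t : ℝ := if 0 < μ then 1 else -1
    let s : ℝ := |μ| ^ (-(1:ℝ)/(k+1))
    s⁻¹ * (t * s ^ (-(k:ℤ))) = μ := by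
  intro t s
  have habs : (0:ℝ) < |μ| := abs_pos.mpr hμ
  have hspos : (0:ℝ) < s := Real.rpow_pos_of_pos habs _
  have hs : s ≠ 0 := hspos.ne'
  have h1 : s⁻¹ * s ^ (-(k:ℤ)) = s ^ (-((k:ℤ)+1)) := by
    rw [← zpow_neg_one s, ← zpow_add₀ hs]
    congr 1
    ring
  have h2 : s ^ (-((k:ℤ)+1)) = |μ| := by
    rw [show s ^ (-((k:ℤ)+1)) = s ^ (((-((k:ℤ)+1) : ℤ)):ℝ) from (Real.rpow_intCast s _).symm]
    show (|μ| ^ (-(1:ℝ)/(k+1))) ^ (((-((k:ℤ)+1) : ℤ)):ℝ) = |μ|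
    rw [← Real.rpow_mul (abs_nonneg μ)]
    rw [show (-(1:ℝ)/(k+1)) * (((-((k:ℤ)+1) : ℤ)):ℝ) = 1 by
      push_cast
      have : ((k:ℝ) + 1) ≠ 0 := by positivity
      field_simp]
    exact Real.rpow_one _
  calc s⁻¹ * (t * s ^ (-(k:ℤ))) = t * (s⁻¹ * s ^ (-(k:ℤ))) := by ring
    _ = t * |μ| := by rw [h1, h2]
    _ = μ := by
        show (if 0 < μ then (1:ℝ) else -1) * |μ| = μ
        split
        · next h => rw [one_mul, abs_of_pos h]
        · next h => rw [neg_one_mul, abs_of_neg (lt_of_le_of_ne (not_lt.mp h) hμ), neg_neg]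

end Final

/-- `M* ⊆ e(F)`, `M*` is a MASA of `e(F)`, and every MASA `M` of `e(F)` whose
`o(F)`-projection is `A` and whose translation part is `ℝ·E(0,e₁)` is `E(F)`-conjugate
to `S` or to `M*`. -/
theorem stmt1 (k : ℕ) (hk : 1 ≤ k) (ε : ℝ) (hε : ε = 1 ∨ ε = -1) :
    Mstar k ⊆ eK (Fmat k ε) ∧
    IsMASA (eK (Fmat k ε)) (Mstar k) ∧
    (∀ M : Set (Matrix (Fin (2 * k + 1 + 1)) (Fin (2 * k + 1 + 1)) ℝ),
      IsMASA (eK (Fmat k ε)) M →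
      {X | ∃ ξ : Fin (2 * k + 1) → ℝ, Emat X ξ ∈ M} = Aset k →
      M ∩ {m | ∃ a : Fin (2 * k + 1) → ℝ,
          m = Emat (0 : Matrix (Fin (2 * k + 1)) (Fin (2 * k + 1)) ℝ) a} =
        {m | ∃ c : ℝ,
          m = Emat (0 : Matrix (Fin (2 * k + 1)) (Fin (2 * k + 1)) ℝ)
            (c • e1 (2 * k + 1))} →
      (ConjTo (Fmat k ε) M (Sset k) ∨ ConjTo (Fmat k ε) M (Mstar k))) := by
  have hεne : ε ≠ 0 := by rcases hε with h | h <;> rw [h] <;> norm_num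
  refine ⟨?_, Mstar_isMASA k ε hεne, ?_⟩
  · rw [Mstar_eq]
    exact Mv_subset_eK k ε _
  · intro M hM hproj htr
    obtain ⟨v, rfl⟩ := M_structure k hk ε M hM hproj htr
    by_cases hμ : v ⟨2*k, by omega⟩ = 0
    · left
      refine ⟨Dg k 1 1, (fun i : Fin (2*k+1) =>
        if h : i.val = 0 then 0 else (-v) ⟨i.val - 1, by omega⟩),
        Dg_F k one_ne_zero (by norm_num) ε, ?_⟩
      rw [Sset_eq, conj_Mv k one_ne_zero one_ne_zero]
      have hvec : (1:ℝ)⁻¹ • (Dg k 1 1 *ᵥ (0 : Fin (2*k+1) → ℝ))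
          - shiftMat (2*k+1) *ᵥ (fun i : Fin (2*k+1) =>
            if h : i.val = 0 then 0 else (-v) ⟨i.val - 1, by omega⟩) = v := by
        rw [mulVec_zero, smul_zero, zero_sub,
          liftA_spec k (-v) (by rw [Pi.neg_apply, hμ, neg_zero]), neg_neg]
      rw [hvec]
    · right
      set μ := v ⟨2*k, by omega⟩ with hμdef
      set t : ℝ := if 0 < μ then 1 else -1 with htdef
      set s : ℝ := |μ| ^ (-(1:ℝ)/(k+1)) with hsdef
      have habs : (0:ℝ) < |μ| := abs_pos.mpr hμ
      have hs : s ≠ 0 := (Real.rpow_pos_of_pos habs _).ne'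
      have ht : t ≠ 0 := by
        rw [htdef]
        split <;> norm_num
      have htt : t * t = 1 := by
        rw [htdef]
        split <;> norm_num
      have hcoeff : s⁻¹ * (t * s ^ (-(k:ℤ))) = μ := coeff_eq k μ hμ
      have hw : (μ • elast k - v) ⟨2*k, by omega⟩ = 0 := by
        rw [Pi.sub_apply, Pi.smul_apply, ← hμdef]
        have : elast k ⟨2*k, by omega⟩ = 1 := by simp [elast]
        rw [this, smul_eq_mul, mul_one, sub_self]
      refine ⟨Dg k s t, (fun i : Fin (2*k+1) =>
        if h : i.val = 0 then 0 else (μ • elast k - v) ⟨i.val - 1, by omega⟩),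
        Dg_F k hs htt ε, ?_⟩
      rw [Mstar_eq, conj_Mv k hs ht]
      have hvec : s⁻¹ • (Dg k s t *ᵥ elast k)
          - shiftMat (2*k+1) *ᵥ (fun i : Fin (2*k+1) =>
            if h : i.val = 0 then 0 else (μ • elast k - v) ⟨i.val - 1, by omega⟩) = v := by
        rw [Dg_mulVec_elast, liftA_spec k _ hw, smul_smul, hcoeff, sub_sub_cancel]
      rw [hvec]
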